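/- Let p, q, r, s > 0 with qr/((1+p)(1+s)) < 1 and let 0 < c < d < 1. Then there exist constants 0 < c₁ < 1 < c₂ and 0 < m₁ < 1 < m₂ such that d ≥ c₁ m₂^{q/(1+p)}, c ≤ c₂ m₁^{q/(1+p)}, c c₂^{r/(1+s)} ≤ m₂, and d c₁^{r/(1+s)} ≥ m₁. -/

import Mathlib

theorem stmt8 (p q r s c d : ℝ) (hp : 0 < p) (hq : 0 < q) (hr : 0 < r) (hs : 0 < s)
    (hθ : q * r / ((1 + p) * (1 + s)) < 1)
    (hc : 0 < c) (hcd : c < d) (hd : d < 1) :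
    ∃ c₁ c₂ m₁ m₂ : ℝ, 0 < c₁ ∧ c₁ < 1 ∧ 1 < c₂ ∧ 0 < m₁ ∧ m₁ < 1 ∧ 1 < m₂ ∧
      c₁ * m₂ ^ (q / (1 + p)) ≤ d ∧ c ≤ c₂ * m₁ ^ (q / (1 + p)) ∧
      c * c₂ ^ (r / (1 + s)) ≤ m₂ ∧ m₁ ≤ d * c₁ ^ (r / (1 + s)) := by
  have hp1 : (0:ℝ) < 1 + p := by linarith
  have hs1 : (0:ℝ) < 1 + s := by linarith
  set α := q / (1 + p) with hα
  set β := r / (1 + s) with hβ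
  have hα0 : 0 < α := div_pos hq hp1
  have hβ0 : 0 < β := div_pos hr hs1
  have hθ' : α * β < 1 := by
    have h : α * β = q * r / ((1 + p) * (1 + s)) := by
      rw [hα, hβ, div_mul_div_comm]
    rw [h]; exact hθ
  have hθ0 : 0 < α * β := mul_pos hα0 hβ0
  have h1θ : 0 < 1 - (α * β) ^ 2 := by nlinarith
  have hd0 : 0 < d := lt_trans hc hcd
  have hc1 : c < 1 := lt_trans hcd hd
  have hA : 0 < -Real.log c := by have := Real.log_neg hc hc1; linarith
  have hB : 0 < -Real.log d := by have := Real.log_neg hd0 hd; linarith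
  set A := -Real.log c with hAdef
  set B := -Real.log d with hBdef
  set t := (α * B * (1 + β)) / (1 - (α * β) ^ 2) + 1 with ht
  have ht0 : 0 < t := by
    rw [ht]; positivity
  have htkey : t * (1 - (α * β) ^ 2) = α * B * (1 + β) + (1 - (α * β) ^ 2) := by
    rw [ht, add_mul, div_mul_cancel₀ _ h1θ.ne']; ring
  set x₁ := α * β * t + B with hx₁
  set y₂ := β * t with hy₂
  set y₁ := B + β * x₁ with hy₁
  have hx₁0 : 0 < x₁ := by positivity
  have hy₁0 : 0 < y₁ := by positivity
  have hy₂0 : 0 < y₂ := by positivity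
  refine ⟨Real.exp (-x₁), Real.exp t, Real.exp (-y₁), Real.exp y₂,
    Real.exp_pos _, ?_, ?_, Real.exp_pos _, ?_, ?_, ?_, ?_, ?_, ?_⟩
  · exact Real.exp_lt_one_iff.mpr (by linarith)
  · exact Real.one_lt_exp_iff.mpr ht0
  · exact Real.exp_lt_one_iff.mpr (by linarith)
  · exact Real.one_lt_exp_iff.mpr hy₂0
  · -- c₁ * m₂ ^ α ≤ d
    rw [← Real.exp_mul, ← Real.exp_add]
    have hdlog : d = Real.exp (Real.log d) := (Real.exp_log hd0).symm
    rw [hdlog]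
    apply Real.exp_le_exp.mpr
    have : -x₁ + y₂ * α = -B := by rw [hx₁, hy₂]; ring
    rw [this, hBdef]; ring_nf; linarith [le_refl (Real.log d)]
  · -- c ≤ c₂ * m₁ ^ α
    rw [← Real.exp_mul, ← Real.exp_add]
    have hclog : c = Real.exp (Real.log c) := (Real.exp_log hc).symm
    nth_rewrite 1 [hclog]
    apply Real.exp_le_exp.mpr
    have hlogc : Real.log c = -A := by rw [hAdef]; ring
    rw [hlogc]
    have hexp : t + -y₁ * α = t * (1 - (α*β)^2) - B * α * (1 + β) := by
      rw [hy₁, hx₁]; ring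
    rw [hexp, htkey]
    nlinarith
  · -- c * c₂ ^ β ≤ m₂
    rw [← Real.exp_mul]
    have hclog : c = Real.exp (Real.log c) := (Real.exp_log hc).symm
    nth_rewrite 1 [hclog]
    rw [← Real.exp_add]
    apply Real.exp_le_exp.mpr
    have : Real.log c = -A := by rw [hAdef]; ring
    rw [this, hy₂]; linarith
  · -- m₁ ≤ d * c₁ ^ β
    rw [← Real.exp_mul]
    have hdlog : d = Real.exp (Real.log d) := (Real.exp_log hd0).symm
    rw [hdlog, ← Real.exp_add]
    apply Real.exp_le_exp.mpr
    have : Real.log d = -B := by rw [hBdef]; ring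
    rw [this, hy₁]; linarith
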